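/- Let 0 < α < 1. For x,y ∈ R^n with x ≠ 0, write y = y_x + y_x' where y_x is the orthogonal projection of y onto the line spanned by x and y_x' = y - y_x (and y_x = y, y_x' = 0 if x = 0). Then the two conditions on a function f: (A) |f(x)-f(y)| ≤ K·min{|x-y|^α, (|x-y|/(1+|x|+|y|))^{α/2} + ((|x|+|y|)sinθ)^α} for all x,y, and (B) |f(x)-f(y)| ≤ K'·min{|x-y|^α, (|x-y_x|/(1+|x|))^{α/2} + |y_x'|^α} for all x,y, are equivalent, in the sense that (A) with constant K implies (B) with constant K' ≤ C·K and conversely, where C depends only on α and n. -/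

import Mathlib

open Real MeasureTheory Set

open Classical in
noncomputable def sinAngle {n : ℕ} (x y : EuclideanSpace ℝ (Fin n)) : ℝ :=
  if x = 0 ∨ y = 0 then 0 else Real.sin (InnerProductGeometry.angle x y)

open Classical in
noncomputable def projPar {n : ℕ} (x y : EuclideanSpace ℝ (Fin n)) :
    EuclideanSpace ℝ (Fin n) :=
  if x = 0 then y else ((inner ℝ x y : ℝ) / ‖x‖ ^ 2) • x

noncomputable def projOrth {n : ℕ} (x y : EuclideanSpace ℝ (Fin n)) :
    EuclideanSpace ℝ (Fin n) :=
  y - projPar x y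

variable {n : ℕ}

lemma sinAngle_nonneg (x y : EuclideanSpace ℝ (Fin n)) : 0 ≤ sinAngle x y := by
  unfold sinAngle
  split
  · exact le_refl 0
  · exact Real.sin_nonneg_of_nonneg_of_le_pi (InnerProductGeometry.angle_nonneg _ _)
      (InnerProductGeometry.angle_le_pi _ _)

lemma sinAngle_comm (x y : EuclideanSpace ℝ (Fin n)) : sinAngle x y = sinAngle y x := by
  unfold sinAngle
  by_cases h : x = 0 ∨ y = 0
  · rw [if_pos h, if_pos (Or.symm h)]
  · rw [if_neg h, if_neg (fun h' => h (Or.symm h')), InnerProductGeometry.angle_comm]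

lemma sq_le_norms {a b : ℝ} (ha : 0 ≤ a) (hb : 0 ≤ b) (h : a^2 ≤ b^2) : a ≤ b := by
  nlinarith

lemma par_dist (x y : EuclideanSpace ℝ (Fin n)) : ‖x - projPar x y‖ ≤ ‖x - y‖ := by
  unfold projPar
  split
  · rename_i h; subst h; exact le_refl _
  · rename_i hx
    set w : ℝ := inner ℝ x y with hw
    have ha : (0:ℝ) < ‖x‖ := norm_pos_iff.mpr hx
    have ha2 : (0:ℝ) < ‖x‖^2 := by positivity
    have hxp : x - (w / ‖x‖^2) • x = (1 - w / ‖x‖^2) • x := by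
      rw [sub_smul, one_smul]
    rw [hxp]
    refine sq_le_norms (norm_nonneg _) (norm_nonneg _) ?_
    rw [norm_smul, mul_pow, Real.norm_eq_abs, sq_abs, norm_sub_sq_real]
    have hcs : w^2 ≤ (‖x‖ * ‖y‖)^2 := by
      have := abs_real_inner_le_norm x y
      nlinarith [abs_nonneg w, sq_abs w]
    have hexp : (1 - w / ‖x‖^2)^2 * ‖x‖^2 = ‖x‖^2 - 2*w + w^2/‖x‖^2 := by
      field_simp; ring
    rw [hexp]
    have : w^2 / ‖x‖^2 ≤ ‖y‖^2 := by
      rw [div_le_iff₀ ha2]; nlinarith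
    linarith

lemma orth_sq (x y : EuclideanSpace ℝ (Fin n)) (hx : x ≠ 0) :
    ‖projOrth x y‖^2 = ‖y‖^2 - (inner ℝ x y : ℝ)^2 / ‖x‖^2 := by
  have ha2 : (0:ℝ) < ‖x‖^2 := pow_pos (norm_pos_iff.mpr hx) 2
  unfold projOrth projPar
  rw [if_neg hx]
  set w : ℝ := inner ℝ x y with hw
  rw [norm_sub_sq_real, real_inner_smul_right, norm_smul, mul_pow, Real.norm_eq_abs, sq_abs,
    real_inner_comm, ← hw]
  field_simp
  ring

lemma orth_le (x y : EuclideanSpace ℝ (Fin n)) :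
    ‖projOrth x y‖ ≤ (‖x‖ + ‖y‖) * sinAngle x y := by
  by_cases hx : x = 0
  · subst hx
    have : projOrth (0 : EuclideanSpace ℝ (Fin n)) y = 0 := by
      unfold projOrth projPar; rw [if_pos rfl]; simp
    rw [this, norm_zero]
    exact mul_nonneg (by positivity) (sinAngle_nonneg _ _)
  by_cases hy : y = 0
  · subst hy
    have : projOrth x (0 : EuclideanSpace ℝ (Fin n)) = 0 := by
      unfold projOrth projPar; rw [if_neg hx]; simp
    rw [this, norm_zero]
    exact mul_nonneg (by positivity) (sinAngle_nonneg _ _)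
  have ha : (0:ℝ) < ‖x‖ := norm_pos_iff.mpr hx
  have hb : (0:ℝ) < ‖y‖ := norm_pos_iff.mpr hy
  have hs : sinAngle x y = Real.sin (InnerProductGeometry.angle x y) := by
    unfold sinAngle; rw [if_neg (by tauto)]
  have hsnn : 0 ≤ sinAngle x y := sinAngle_nonneg x y
  refine sq_le_norms (norm_nonneg _) (mul_nonneg (by positivity) hsnn) ?_
  rw [orth_sq x y hx, hs, mul_pow, Real.sin_sq, InnerProductGeometry.cos_angle]
  set w : ℝ := inner ℝ x y with hw
  have hcs : w^2 ≤ (‖x‖ * ‖y‖)^2 := by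
    have := abs_real_inner_le_norm x y
    nlinarith [abs_nonneg w, sq_abs w]
  have key : ‖y‖^2 * (1 - (w / (‖x‖*‖y‖))^2) = ‖y‖^2 - w^2/‖x‖^2 := by
    field_simp
  have hge : ‖y‖^2 ≤ (‖x‖+‖y‖)^2 := by nlinarith
  have h1 : 0 ≤ 1 - (w / (‖x‖*‖y‖))^2 := by
    rw [div_pow, sub_nonneg, div_le_one (by positivity)]
    exact hcs
  nlinarith [mul_le_mul_of_nonneg_right hge h1]

lemma sin_proj (x y : EuclideanSpace ℝ (Fin n)) : sinAngle x (projPar x y) = 0 := by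
  unfold sinAngle
  split
  · rfl
  · rename_i h
    push_neg at h
    obtain ⟨hx, hp⟩ := h
    unfold projPar at hp ⊢
    rw [if_neg hx] at hp ⊢
    set c : ℝ := (inner ℝ x y : ℝ) / ‖x‖^2 with hc
    have hcne : c ≠ 0 := by
      intro h0; apply hp; rw [h0, zero_smul]
    have ha : (0:ℝ) < ‖x‖ := norm_pos_iff.mpr hx
    have hcos : Real.cos (InnerProductGeometry.angle x (c • x)) ^ 2 = 1 := by
      rw [InnerProductGeometry.cos_angle, real_inner_smul_right, norm_smul,
        real_inner_self_eq_norm_sq, Real.norm_eq_abs, div_pow]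
      have habs : (|c| * ‖x‖)^2 = c^2 * ‖x‖^2 := by rw [mul_pow, sq_abs]
      rw [mul_pow ‖x‖ (|c| * ‖x‖), habs]
      field_simp
    have hsin : Real.sin (InnerProductGeometry.angle x (c • x)) ^ 2 = 0 := by
      rw [Real.sin_sq, hcos]; ring
    exact pow_eq_zero_iff (by norm_num) |>.mp hsin

lemma nonneg_K {K m : ℝ} (hm : 0 < m) (h : 0 ≤ K * m) : 0 ≤ K := by
  by_contra hneg
  push_neg at hneg
  nlinarith

lemma two_rpow_le (α : ℝ) (hα : α ≤ 2) : (2:ℝ) ^ (α/2) ≤ 2 := by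
  calc (2:ℝ) ^ (α/2) ≤ (2:ℝ) ^ (1:ℝ) :=
        Real.rpow_le_rpow_of_exponent_le one_le_two (by linarith)
    _ = 2 := Real.rpow_one 2

lemma witness_pos (n : ℕ) (hn : 1 ≤ n) :
    ∃ y : EuclideanSpace ℝ (Fin n), ‖y‖ = 1 := by
  refine ⟨EuclideanSpace.single ⟨0, hn⟩ (1:ℝ), ?_⟩
  rw [EuclideanSpace.norm_single]
  norm_num

theorem stmt_1 (n : ℕ) (hn : 1 ≤ n) (α : ℝ) (hα0 : 0 < α) (hα1 : α < 1) :
    ∃ C > 0,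
      (∀ (f : EuclideanSpace ℝ (Fin n) → ℝ) (K : ℝ),
        (∀ x y, |f x - f y| ≤ K * min (‖x - y‖ ^ α)
            ((‖x - y‖ / (1 + ‖x‖ + ‖y‖)) ^ (α / 2)
              + ((‖x‖ + ‖y‖) * sinAngle x y) ^ α)) →
        (∀ x y, |f x - f y| ≤ (C * K) * min (‖x - y‖ ^ α)
            ((‖x - projPar x y‖ / (1 + ‖x‖)) ^ (α / 2)
              + ‖projOrth x y‖ ^ α))) ∧
      (∀ (f : EuclideanSpace ℝ (Fin n) → ℝ) (K' : ℝ),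
        (∀ x y, |f x - f y| ≤ K' * min (‖x - y‖ ^ α)
            ((‖x - projPar x y‖ / (1 + ‖x‖)) ^ (α / 2)
              + ‖projOrth x y‖ ^ α)) →
        (∀ x y, |f x - f y| ≤ (C * K') * min (‖x - y‖ ^ α)
            ((‖x - y‖ / (1 + ‖x‖ + ‖y‖)) ^ (α / 2)
              + ((‖x‖ + ‖y‖) * sinAngle x y) ^ α))) := by
  obtain ⟨y0, hy0⟩ := witness_pos n hn
  have hy0ne : y0 ≠ 0 := by
    intro h; rw [h, norm_zero] at hy0; norm_num at hy0
  have hd0 : ‖(0 : EuclideanSpace ℝ (Fin n)) - y0‖ = 1 := by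
    rw [zero_sub, norm_neg, hy0]
  refine ⟨2, by norm_num, ?_, ?_⟩
  · -- A implies B
    intro f K hA x y
    have hK : 0 ≤ K := by
      refine nonneg_K (K := K) ?_ ((abs_nonneg _).trans (hA 0 y0))
      refine lt_min (Real.rpow_pos_of_pos (by rw [hd0]; norm_num) _) ?_
      refine add_pos_of_pos_of_nonneg (Real.rpow_pos_of_pos ?_ _)
        (Real.rpow_nonneg (mul_nonneg (by positivity) (sinAngle_nonneg _ _)) _)
      rw [hd0]
      positivity
    set p := projPar x y with hp
    have hxp : |f x - f p| ≤ K * ((‖x - p‖ / (1 + ‖x‖)) ^ (α/2)) := by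
      refine (hA x p).trans (mul_le_mul_of_nonneg_left ?_ hK)
      refine (min_le_right _ _).trans ?_
      rw [hp, sin_proj, mul_zero, Real.zero_rpow hα0.ne', add_zero]
      refine Real.rpow_le_rpow (by positivity) ?_ (by positivity)
      rw [div_le_div_iff₀ (by positivity) (by positivity)]
      nlinarith [norm_nonneg p, norm_nonneg (x - p), norm_nonneg x]
    have hpy : |f p - f y| ≤ K * ‖projOrth x y‖ ^ α := by
      refine (hA p y).trans (mul_le_mul_of_nonneg_left ?_ hK)
      refine (min_le_left _ _).trans ?_
      have : p - y = -(projOrth x y) := by simp [projOrth, hp]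
      rw [this, norm_neg]
    have hdist : |f x - f y| ≤ K * ‖x - y‖ ^ α :=
      (hA x y).trans (mul_le_mul_of_nonneg_left (min_le_left _ _) hK)
    have hB2 : |f x - f y| ≤ K * ((‖x - p‖ / (1 + ‖x‖)) ^ (α/2) + ‖projOrth x y‖ ^ α) :=
      calc |f x - f y| ≤ |f x - f p| + |f p - f y| := abs_sub_le _ _ _
        _ ≤ _ := by rw [mul_add]; exact add_le_add hxp hpy
    rcases min_cases (‖x - y‖ ^ α)
        ((‖x - projPar x y‖ / (1 + ‖x‖)) ^ (α/2) + ‖projOrth x y‖ ^ α) with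
      ⟨hm, _⟩ | ⟨hm, _⟩ <;> rw [hm]
    · nlinarith [mul_nonneg hK (Real.rpow_nonneg (norm_nonneg (x - y)) α)]
    · have hnn : 0 ≤ (‖x - projPar x y‖ / (1 + ‖x‖)) ^ (α/2) + ‖projOrth x y‖ ^ α :=
        add_nonneg (Real.rpow_nonneg (by positivity) _) (Real.rpow_nonneg (norm_nonneg _) _)
      nlinarith [mul_nonneg hK hnn]
  · -- B implies A
    intro f K hB x y
    have hK : 0 ≤ K := by
      refine nonneg_K (K := K) ?_ ((abs_nonneg _).trans (hB 0 y0))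
      refine lt_min (Real.rpow_pos_of_pos (by rw [hd0]; norm_num) _) ?_
      refine add_pos_of_pos_of_nonneg (Real.rpow_pos_of_pos ?_ _)
        (Real.rpow_nonneg (norm_nonneg _) _)
      have hpp : projPar (0 : EuclideanSpace ℝ (Fin n)) y0 = y0 := by
        unfold projPar; rw [if_pos rfl]
      rw [hpp, hd0]
      positivity
    have hdist : |f x - f y| ≤ K * ‖x - y‖ ^ α :=
      (hB x y).trans (mul_le_mul_of_nonneg_left (min_le_left _ _) hK)
    have hA2nn : 0 ≤ (‖x - y‖ / (1 + ‖x‖ + ‖y‖)) ^ (α/2)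
        + ((‖x‖ + ‖y‖) * sinAngle x y) ^ α :=
      add_nonneg (Real.rpow_nonneg (by positivity) _)
        (Real.rpow_nonneg (mul_nonneg (by positivity) (sinAngle_nonneg _ _)) _)
    have key : |f x - f y| ≤ K * (2 * ((‖x - y‖ / (1 + ‖x‖ + ‖y‖)) ^ (α/2)
        + ((‖x‖ + ‖y‖) * sinAngle x y) ^ α)) := by
      rcases le_total ‖x‖ ‖y‖ with hab | hab
      · have h := (hB y x).trans (mul_le_mul_of_nonneg_left (min_le_right _ _) hK)
        rw [abs_sub_comm] at h
        refine h.trans (mul_le_mul_of_nonneg_left ?_ hK)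
        have t1 : (‖y - projPar y x‖ / (1 + ‖y‖)) ^ (α/2)
            ≤ 2 * (‖x - y‖ / (1 + ‖x‖ + ‖y‖)) ^ (α/2) := by
          have h1 : ‖y - projPar y x‖ ≤ ‖x - y‖ := (par_dist y x).trans (norm_sub_rev y x).le
          have hle : ‖y - projPar y x‖ / (1 + ‖y‖) ≤ 2 * (‖x - y‖ / (1 + ‖x‖ + ‖y‖)) := by
            have hbp : (0:ℝ) < 1 + ‖y‖ := by positivity
            have habp : (0:ℝ) < 1 + ‖x‖ + ‖y‖ := by positivity
            have heq : 2 * (‖x - y‖ / (1 + ‖x‖ + ‖y‖)) = (2 * ‖x - y‖) / (1 + ‖x‖ + ‖y‖) := by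
              ring
            rw [heq, div_le_div_iff₀ hbp habp]
            nlinarith [norm_nonneg (x - y), norm_nonneg (y - projPar y x), norm_nonneg x]
          calc (‖y - projPar y x‖ / (1 + ‖y‖)) ^ (α/2)
              ≤ (2 * (‖x - y‖ / (1 + ‖x‖ + ‖y‖))) ^ (α/2) :=
                Real.rpow_le_rpow (by positivity) hle (by positivity)
            _ = (2:ℝ) ^ (α/2) * (‖x - y‖ / (1 + ‖x‖ + ‖y‖)) ^ (α/2) :=
                Real.mul_rpow (by norm_num) (by positivity)
            _ ≤ 2 * (‖x - y‖ / (1 + ‖x‖ + ‖y‖)) ^ (α/2) :=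
                mul_le_mul_of_nonneg_right (two_rpow_le α (by linarith))
                  (Real.rpow_nonneg (by positivity) _)
        have t2 : ‖projOrth y x‖ ^ α ≤ ((‖x‖ + ‖y‖) * sinAngle x y) ^ α := by
          refine Real.rpow_le_rpow (norm_nonneg _) ?_ hα0.le
          calc ‖projOrth y x‖ ≤ (‖y‖ + ‖x‖) * sinAngle y x := orth_le y x
            _ = (‖x‖ + ‖y‖) * sinAngle x y := by rw [add_comm, sinAngle_comm]
        have hs2 : (0:ℝ) ≤ ((‖x‖ + ‖y‖) * sinAngle x y) ^ α :=
          Real.rpow_nonneg (mul_nonneg (by positivity) (sinAngle_nonneg _ _)) _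
        calc (‖y - projPar y x‖ / (1 + ‖y‖)) ^ (α/2) + ‖projOrth y x‖ ^ α
            ≤ 2 * (‖x - y‖ / (1 + ‖x‖ + ‖y‖)) ^ (α/2)
              + ((‖x‖ + ‖y‖) * sinAngle x y) ^ α := add_le_add t1 t2
          _ ≤ _ := by linarith
      · have h := (hB x y).trans (mul_le_mul_of_nonneg_left (min_le_right _ _) hK)
        refine h.trans (mul_le_mul_of_nonneg_left ?_ hK)
        have t1 : (‖x - projPar x y‖ / (1 + ‖x‖)) ^ (α/2)
            ≤ 2 * (‖x - y‖ / (1 + ‖x‖ + ‖y‖)) ^ (α/2) := by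
          have h1 : ‖x - projPar x y‖ ≤ ‖x - y‖ := par_dist x y
          have hle : ‖x - projPar x y‖ / (1 + ‖x‖) ≤ 2 * (‖x - y‖ / (1 + ‖x‖ + ‖y‖)) := by
            have hbp : (0:ℝ) < 1 + ‖x‖ := by positivity
            have habp : (0:ℝ) < 1 + ‖x‖ + ‖y‖ := by positivity
            have heq : 2 * (‖x - y‖ / (1 + ‖x‖ + ‖y‖)) = (2 * ‖x - y‖) / (1 + ‖x‖ + ‖y‖) := by
              ring
            rw [heq, div_le_div_iff₀ hbp habp]
            nlinarith [norm_nonneg (x - y), norm_nonneg (x - projPar x y), norm_nonneg y]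
          calc (‖x - projPar x y‖ / (1 + ‖x‖)) ^ (α/2)
              ≤ (2 * (‖x - y‖ / (1 + ‖x‖ + ‖y‖))) ^ (α/2) :=
                Real.rpow_le_rpow (by positivity) hle (by positivity)
            _ = (2:ℝ) ^ (α/2) * (‖x - y‖ / (1 + ‖x‖ + ‖y‖)) ^ (α/2) :=
                Real.mul_rpow (by norm_num) (by positivity)
            _ ≤ 2 * (‖x - y‖ / (1 + ‖x‖ + ‖y‖)) ^ (α/2) :=
                mul_le_mul_of_nonneg_right (two_rpow_le α (by linarith))
                  (Real.rpow_nonneg (by positivity) _)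
        have t2 : ‖projOrth x y‖ ^ α ≤ ((‖x‖ + ‖y‖) * sinAngle x y) ^ α :=
          Real.rpow_le_rpow (norm_nonneg _) (orth_le x y) hα0.le
        have hs2 : (0:ℝ) ≤ ((‖x‖ + ‖y‖) * sinAngle x y) ^ α :=
          Real.rpow_nonneg (mul_nonneg (by positivity) (sinAngle_nonneg _ _)) _
        calc (‖x - projPar x y‖ / (1 + ‖x‖)) ^ (α/2) + ‖projOrth x y‖ ^ α
            ≤ 2 * (‖x - y‖ / (1 + ‖x‖ + ‖y‖)) ^ (α/2)
              + ((‖x‖ + ‖y‖) * sinAngle x y) ^ α := add_le_add t1 t2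
          _ ≤ _ := by linarith
    rcases min_cases (‖x - y‖ ^ α)
        ((‖x - y‖ / (1 + ‖x‖ + ‖y‖)) ^ (α/2) + ((‖x‖ + ‖y‖) * sinAngle x y) ^ α) with
      ⟨hm, _⟩ | ⟨hm, _⟩ <;> rw [hm]
    · nlinarith [mul_nonneg hK (Real.rpow_nonneg (norm_nonneg (x - y)) α)]
    · nlinarith [mul_nonneg hK hA2nn]
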